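/- Let n = 2m+1 be a positive odd integer and let R = ℂ[α,δ₁,…,δ_n]/(δ₁²,…,δ_n²). For a subset J ⊆ {1,…,n}, let τ_J denote the ring automorphism fixing ω := α + (δ₁+⋯+δ_n)/2 and δ_i for i ∉ J, and sending δ_i to −δ_i for i ∈ J. If s ≥ m, then the elements τ_J(α^s) for all J ⊆ {1,…,n} with |J| even span a subspace of R of dimension at least 2^{n−1}; consequently, the images of α^s under the even flip symmetries are linearly independent in R (there being exactly 2^{n−1} even flip symmetries). -/

import Mathlib

/-!
STATEMENT 9: Let `n = 2m+1` and `R = ℂ[α,δ₁,…,δ_n]/(δ₁²,…,δ_n²)`.  For a subset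
`J ⊆ {1,…,n}` let `τ_J` be the algebra automorphism fixing `ω = α + (δ₁+⋯+δ_n)/2`
and `δ_i` for `i ∉ J`, and sending `δ_i ↦ −δ_i` for `i ∈ J` (equivalently, on the
polynomial ring, `α ↦ α + Σ_{i∈J} δ_i`, `δ_i ↦ ±δ_i`).  If `s ≥ m`, then the images
in `R` of `τ_J(α^s)` for the `2^{n−1}` subsets `J` with `|J|` even are linearly
independent over `ℂ` (hence span a subspace of dimension at least `2^{n−1}`).
Variables: `X none = α`, `X (some i) = δ_i` in `MvPolynomial (Option (Fin n)) ℂ`.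
-/

open MvPolynomial

/-- The flip symmetry `τ_J` on the polynomial ring `ℂ[α,δ₁,…,δ_n]`:
it fixes `ω = α + (Σ δ_i)/2` and negates `δ_i` exactly for `i ∈ J`. -/
noncomputable def Stmt9.tau {n : ℕ} (J : Finset (Fin n)) :
    MvPolynomial (Option (Fin n)) ℂ →ₐ[ℂ] MvPolynomial (Option (Fin n)) ℂ :=
  MvPolynomial.aeval fun v =>
    match v with
    | none => X none + ∑ j ∈ J, X (some j)
    | some i => if i ∈ J then -X (some i) else X (some i)

/-- The ideal `(δ₁²,…,δ_n²)`. -/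
noncomputable def Stmt9.sqIdeal (n : ℕ) : Ideal (MvPolynomial (Option (Fin n)) ℂ) :=
  Ideal.span (Set.range fun i : Fin n => (X (some i) : MvPolynomial (Option (Fin n)) ℂ) ^ 2)

set_option linter.unusedSectionVars false
set_option linter.unusedVariables false
set_option maxHeartbeats 1000000

namespace Stmt9Aux

open MvPolynomial Finset

variable {α : Type*} [Fintype α] [DecidableEq α]

lemma sum_ite_subset (T : Finset α) (f : Finset α → ℂ) :
    ∑ B : Finset α, (if B ⊆ T then f B else 0) = ∑ B ∈ T.powerset, f B := by
  rw [← sum_filter]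
  refine sum_congr ?_ fun _ _ => rfl
  ext B; simp

lemma sum_two_neg_one (T : Finset α) :
    ∑ S ∈ T.powerset, (2:ℂ) ^ S.card * (-1) ^ (T.card - S.card) = 1 := by
  calc ∑ S ∈ T.powerset, (2:ℂ)^S.card * (-1)^(T.card - S.card)
      = ∑ S ∈ T.powerset, (∏ _ ∈ S, (2:ℂ)) * ∏ _ ∈ T \ S, (-1:ℂ) := by
        refine sum_congr rfl fun S hS => ?_
        rw [prod_const, prod_const, card_sdiff_of_subset (mem_powerset.mp hS)]
    _ = ∏ _ ∈ T, ((2:ℂ) + (-1)) := (prod_add _ _ _).symm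
    _ = 1 := by norm_num

lemma sum_neg_one (T : Finset α) :
    ∑ S ∈ T.powerset, (-1:ℂ)^S.card = if T = ∅ then 1 else 0 := by
  calc ∑ S ∈ T.powerset, (-1:ℂ)^S.card
      = ∑ S ∈ T.powerset, (∏ _ ∈ S, (-1:ℂ)) * ∏ _ ∈ T \ S, (1:ℂ) := by
        refine sum_congr rfl fun S hS => ?_; simp
    _ = ∏ _ ∈ T, ((-1:ℂ) + 1) := (prod_add _ _ _).symm
    _ = _ := by
        rw [prod_const]
        norm_num
        rcases eq_or_ne T ∅ with h | h
        · simp [h]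
        · rw [if_neg h, zero_pow]
          simpa [card_eq_zero] using h

lemma S1 (A J : Finset α) (hAJ : A ⊆ J) :
    ∑ B : Finset α,
      (if A ⊆ B ∧ B ⊆ J then (2:ℂ)^(B.card - A.card) * (-1)^(J.card - B.card) else 0) = 1 := by
  rw [← sum_filter]
  have hset : univ.filter (fun B => A ⊆ B ∧ B ⊆ J) = (J \ A).powerset.image (fun S => A ∪ S) := by
    ext B
    simp only [mem_filter, mem_univ, true_and, mem_image, mem_powerset]
    constructor
    · rintro ⟨h1, h2⟩
      exact ⟨B \ A, sdiff_subset_sdiff h2 le_rfl, union_sdiff_of_subset h1⟩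
    · rintro ⟨S, hS, rfl⟩
      constructor
      · exact subset_union_left
      · exact union_subset hAJ (hS.trans sdiff_subset)
  rw [hset, sum_image ?inj]
  case inj =>
    intro S1 hS1 S2 hS2 h
    have dAJ : Disjoint A (J \ A) := disjoint_sdiff
    have d1 : Disjoint A S1 := dAJ.mono_right (mem_powerset.mp hS1)
    have d2 : Disjoint A S2 := dAJ.mono_right (mem_powerset.mp hS2)
    have := congrArg (fun B => B \ A) h
    simpa [union_sdiff_cancel_left d1, union_sdiff_cancel_left d2] using this
  refine Eq.trans ?_ (sum_two_neg_one (J \ A))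
  refine sum_congr rfl fun S hS => ?_
  have hS' : S ⊆ J \ A := mem_powerset.mp hS
  have d : Disjoint A S := (disjoint_sdiff (s := A) (t := J)).mono_right hS'
  have hcard : (A ∪ S).card = A.card + S.card := card_union_of_disjoint d
  have h1 : S.card ≤ (J \ A).card := card_le_card hS'
  have h2 : (J \ A).card = J.card - A.card := card_sdiff_of_subset hAJ
  have h3 : A.card ≤ J.card := card_le_card hAJ
  rw [hcard]
  congr 1
  · congr 1; omega
  · congr 1; omega


noncomputable def Usum (g : Finset α → ℂ) (A : Finset α) : ℂ :=
  ∑ J : Finset α, if A ⊆ J then g J else 0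

noncomputable def dsum (g : Finset α → ℂ) (B : Finset α) : ℂ :=
  ∑ J : Finset α, if B ⊆ J then (-1:ℂ)^(J.card - B.card) * g J else 0

lemma dsum_eq (g : Finset α → ℂ) (hpar : ∀ J : Finset α, ¬ Even J.card → g J = 0)
    (B : Finset α) : dsum g B = (-1:ℂ)^B.card * Usum g B := by
  rw [Usum, dsum, mul_sum]
  refine sum_congr rfl fun J _ => ?_
  by_cases hBJ : B ⊆ J
  · rw [if_pos hBJ, if_pos hBJ]
    by_cases hg : g J = 0
    · rw [hg, mul_zero, mul_zero]
    · have hev : Even J.card := by by_contra h; exact hg (hpar J h)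
      have hb : B.card ≤ J.card := card_le_card hBJ
      have : (-1:ℂ)^(J.card - B.card) = (-1)^B.card := by
        have h2 : J.card - B.card + 2 * B.card = J.card + B.card := by omega
        calc (-1:ℂ)^(J.card - B.card)
            = (-1:ℂ)^(J.card - B.card) * ((-1)^2)^B.card := by norm_num
          _ = (-1:ℂ)^(J.card - B.card + 2 * B.card) := by
              rw [← pow_mul, ← pow_add]
          _ = (-1:ℂ)^(J.card + B.card) := by rw [h2]
          _ = (-1:ℂ)^B.card := by rw [pow_add, hev.neg_one_pow, one_mul]
      rw [this]
  · rw [if_neg hBJ, if_neg hBJ, mul_zero]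

lemma I1 (g : Finset α → ℂ) (A : Finset α) :
    ∑ B : Finset α, (if A ⊆ B then (2:ℂ)^(B.card - A.card) * dsum g B else 0) = Usum g A := by
  calc ∑ B : Finset α, (if A ⊆ B then (2:ℂ)^(B.card - A.card) * dsum g B else 0)
      = ∑ B : Finset α, ∑ J : Finset α,
          (if A ⊆ B ∧ B ⊆ J then (2:ℂ)^(B.card - A.card) * ((-1:ℂ)^(J.card - B.card) * g J) else 0) := by
        refine sum_congr rfl fun B _ => ?_
        by_cases h : A ⊆ B
        · rw [if_pos h, dsum, mul_sum]
          refine sum_congr rfl fun J _ => ?_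
          by_cases h2 : B ⊆ J
          · rw [if_pos h2, if_pos ⟨h, h2⟩]
          · rw [if_neg h2, if_neg (fun hc => h2 hc.2), mul_zero]
        · rw [if_neg h]
          exact (sum_eq_zero fun J _ => if_neg (fun hc => h hc.1)).symm
    _ = ∑ J : Finset α, ∑ B : Finset α,
          (if A ⊆ B ∧ B ⊆ J then (2:ℂ)^(B.card - A.card) * ((-1:ℂ)^(J.card - B.card) * g J) else 0) :=
        sum_comm
    _ = Usum g A := by
        rw [Usum]
        refine sum_congr rfl fun J _ => ?_
        by_cases hAJ : A ⊆ J
        · rw [if_pos hAJ]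
          calc ∑ B : Finset α,
                (if A ⊆ B ∧ B ⊆ J then (2:ℂ)^(B.card - A.card) * ((-1:ℂ)^(J.card - B.card) * g J) else 0)
              = (∑ B : Finset α,
                (if A ⊆ B ∧ B ⊆ J then (2:ℂ)^(B.card - A.card) * (-1:ℂ)^(J.card - B.card) else 0)) * g J := by
                rw [sum_mul]
                refine sum_congr rfl fun B _ => ?_
                split_ifs with h
                · ring
                · rw [zero_mul]
            _ = g J := by rw [S1 A J hAJ, one_mul]
        · rw [if_neg hAJ]
          exact sum_eq_zero fun B _ => if_neg (fun hc => hAJ (hc.1.trans hc.2))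

theorem comb (m : ℕ) (g : Finset α → ℂ) (hcard : Fintype.card α ≤ 2 * m + 1)
    (hpar : ∀ J : Finset α, ¬ Even J.card → g J = 0)
    (hU : ∀ A : Finset α, A.card ≤ m → Usum g A = 0) :
    ∀ J : Finset α, g J = 0 := by
  -- h' vanishes on small sets
  have hd : ∀ B : Finset α, B.card ≤ m → dsum g B = 0 := fun B hB => by
    rw [dsum_eq g hpar, hU B hB, mul_zero]
  set h' : Finset α → ℂ := fun B => 2^B.card * dsum g B with hh'def
  have hh'0 : ∀ B : Finset α, B.card ≤ m → h' B = 0 := fun B hB => by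
    simp only [hh'def, hd B hB, mul_zero]
  -- upper sums of h' vanish on small sets
  have hUh : ∀ A : Finset α, A.card ≤ m → ∑ B : Finset α, (if A ⊆ B then h' B else 0) = 0 := by
    intro A hA
    have key : ∑ B : Finset α, (if A ⊆ B then h' B else 0)
        = (2:ℂ)^A.card * ∑ B : Finset α, (if A ⊆ B then (2:ℂ)^(B.card - A.card) * dsum g B else 0) := by
      rw [mul_sum]
      refine sum_congr rfl fun B _ => ?_
      by_cases h : A ⊆ B
      · rw [if_pos h, if_pos h, hh'def]
        have : A.card + (B.card - A.card) = B.card := by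
          have := card_le_card h; omega
        rw [← mul_assoc, ← pow_add, this]
      · rw [if_neg h, if_neg h, mul_zero]
    rw [key, I1, hU A hA, mul_zero]
  -- lower sums of h' vanish on large sets
  have hsub : ∀ D : Finset α, m + 1 ≤ D.card → ∑ B : Finset α, (if B ⊆ D then h' B else 0) = 0 := by
    intro D hD
    have hC : (Dᶜ : Finset α).card ≤ m := by
      have h1 : (Dᶜ : Finset α).card = Fintype.card α - D.card := card_compl D
      have h2 : D.card ≤ Fintype.card α := card_le_univ D
      omega
    set C : Finset α := Dᶜ with hCdef
    calc ∑ B : Finset α, (if B ⊆ D then h' B else 0)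
        = ∑ B : Finset α, h' B * (∑ A : Finset α, if A ⊆ C ∩ B then (-1:ℂ)^A.card else 0) := by
          refine sum_congr rfl fun B _ => ?_
          rw [sum_ite_subset (C ∩ B) (fun A => (-1:ℂ)^A.card), sum_neg_one]
          have hiff : B ⊆ D ↔ C ∩ B = ∅ := by
            rw [hCdef]
            constructor
            · intro h
              rw [eq_empty_iff_forall_notMem]
              intro x hx
              rw [mem_inter, mem_compl] at hx
              exact hx.1 (h hx.2)
            · intro h x hx
              by_contra hxD
              have : x ∈ Dᶜ ∩ B := by rw [mem_inter, mem_compl]; exact ⟨hxD, hx⟩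
              rw [h] at this
              exact notMem_empty x this
          by_cases h : B ⊆ D
          · rw [if_pos h, if_pos (hiff.mp h), mul_one]
          · rw [if_neg h, if_neg (fun hc => h (hiff.mpr hc)), mul_zero]
      _ = ∑ B : Finset α, ∑ A : Finset α,
            (if A ⊆ C ∧ A ⊆ B then h' B * (-1:ℂ)^A.card else 0) := by
          refine sum_congr rfl fun B _ => ?_
          rw [mul_sum]
          refine sum_congr rfl fun A _ => ?_
          by_cases h : A ⊆ C ∩ B
          · rw [if_pos h, if_pos (subset_inter_iff.mp h)]
          · rw [if_neg h, if_neg (fun hc => h (subset_inter_iff.mpr hc)), mul_zero]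
      _ = ∑ A : Finset α, ∑ B : Finset α,
            (if A ⊆ C ∧ A ⊆ B then h' B * (-1:ℂ)^A.card else 0) := sum_comm
      _ = 0 := by
          refine sum_eq_zero fun A _ => ?_
          by_cases hAC : A ⊆ C
          · have hAm : A.card ≤ m := le_trans (card_le_card hAC) hC
            calc ∑ B : Finset α, (if A ⊆ C ∧ A ⊆ B then h' B * (-1:ℂ)^A.card else 0)
                = (∑ B : Finset α, (if A ⊆ B then h' B else 0)) * (-1:ℂ)^A.card := by
                  rw [sum_mul]
                  refine sum_congr rfl fun B _ => ?_
                  by_cases h : A ⊆ B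
                  · rw [if_pos ⟨hAC, h⟩, if_pos h]
                  · rw [if_neg (fun hc => h hc.2), if_neg h, zero_mul]
              _ = 0 := by rw [hUh A hAm, zero_mul]
          · exact sum_eq_zero fun B _ => if_neg (fun hc => hAC hc.1)
  -- h' vanishes everywhere
  have hh' : ∀ D : Finset α, h' D = 0 := by
    have main : ∀ k : ℕ, ∀ D : Finset α, D.card ≤ k → h' D = 0 := by
      intro k
      induction k with
      | zero => intro D hD; exact hh'0 D (by omega)
      | succ k ih =>
        intro D hD
        rcases le_or_gt D.card m with h | h
        · exact hh'0 D h
        · have h0 := hsub D h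
          rw [sum_ite_subset D h'] at h0
          have hsingle : ∑ B ∈ D.powerset, h' B = h' D := by
            refine sum_eq_single_of_mem D (mem_powerset_self D) fun B hB hne => ?_
            have hBD : B ⊆ D := mem_powerset.mp hB
            have : B.card < D.card := card_lt_card (Finset.ssubset_iff_subset_ne.mpr ⟨hBD, hne⟩)
            exact ih B (by omega)
          rw [hsingle] at h0
          exact h0
    exact fun D => main (Fintype.card α) D (card_le_univ D)
  -- hence dsum vanishes, hence Usum vanishes
  have hdall : ∀ B : Finset α, dsum g B = 0 := by
    intro B
    have := hh' B
    simp only [hh'def] at this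
    have h2 : (2:ℂ)^B.card ≠ 0 := pow_ne_zero _ two_ne_zero
    exact (mul_eq_zero.mp this).resolve_left h2
  have hUall : ∀ A : Finset α, Usum g A = 0 := by
    intro A
    rw [← I1 g A]
    exact sum_eq_zero fun B _ => by rw [hdall B, mul_zero, ite_self]
  -- descending induction
  have main2 : ∀ k : ℕ, ∀ J : Finset α, Fintype.card α - J.card ≤ k → g J = 0 := by
    intro k
    induction k with
    | zero =>
      intro J hJ
      have h0 := hUall J
      rw [Usum, ← sum_filter] at h0
      rw [← h0]
      refine (sum_eq_single_of_mem J (by simp) fun A hA hne => ?_).symm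
      have hJA : J ⊆ A := (mem_filter.mp hA).2
      have : J.card < A.card := card_lt_card (Finset.ssubset_iff_subset_ne.mpr ⟨hJA, hne.symm⟩)
      have := card_le_univ A
      omega
    | succ k ih =>
      intro J hJ
      have h0 := hUall J
      rw [Usum, ← sum_filter] at h0
      rw [← h0]
      refine (sum_eq_single_of_mem J (by simp) fun A hA hne => ?_).symm
      have hJA : J ⊆ A := (mem_filter.mp hA).2
      have hlt : J.card < A.card := card_lt_card (Finset.ssubset_iff_subset_ne.mpr ⟨hJA, hne.symm⟩)
      have hle := card_le_univ A
      exact ih A (by omega)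
  exact fun J => main2 (Fintype.card α) J (Nat.sub_le _ _)

end Stmt9Aux

namespace Stmt9Front

open MvPolynomial Finset

variable {σ : Type*} [DecidableEq σ]

noncomputable def pd (i : σ) : Module.End ℂ (MvPolynomial σ ℂ) :=
  (pderiv i).toLinearMap

@[simp] lemma pd_apply (i : σ) (p : MvPolynomial σ ℂ) : pd i p = pderiv i p := rfl

lemma pd_comm (i j : σ) : Commute (pd i) (pd j) := by
  rcases eq_or_ne i j with rfl | hij
  · exact Commute.refl _
  · apply LinearMap.ext
    intro p
    simp only [Module.End.mul_apply, pd_apply]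
    induction p using MvPolynomial.induction_on' with
    | monomial u a =>
      simp only [pderiv_monomial]
      have h1 : ((u - Finsupp.single j 1 : σ →₀ ℕ)) i = u i := by
        rw [Finsupp.tsub_apply, Finsupp.single_eq_of_ne hij]; rfl
      have h2 : ((u - Finsupp.single i 1 : σ →₀ ℕ)) j = u j := by
        rw [Finsupp.tsub_apply, Finsupp.single_eq_of_ne hij.symm]; rfl
      rw [h1, h2]
      have h3 : u - Finsupp.single j 1 - Finsupp.single i 1
          = u - Finsupp.single i 1 - Finsupp.single j 1 := by
        ext a
        simp only [Finsupp.tsub_apply]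
        omega
      rw [h3]
      ring_nf
    | add p q hp hq =>
      simp only [map_add, hp, hq]

noncomputable def DD (I : Finset σ) : Module.End ℂ (MvPolynomial σ ℂ) :=
  I.noncommProd pd (fun x _ y _ _ => pd_comm x y)

@[simp] lemma DD_empty (p : MvPolynomial σ ℂ) : DD (∅ : Finset σ) p = p := by
  rw [DD]; exact LinearMap.congr_fun (noncommProd_empty _ _) p

lemma DD_insert {i : σ} {I : Finset σ} (h : i ∉ I) (p : MvPolynomial σ ℂ) :
    DD (insert i I) p = pderiv i (DD I p) := by
  rw [DD]; exact LinearMap.congr_fun (noncommProd_insert_of_notMem _ _ _ _ h) p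




variable {n : ℕ}

local notation "Pn" => MvPolynomial (Option (Fin n)) ℂ

noncomputable def Do (I : Finset (Fin n)) : Module.End ℂ Pn :=
  I.noncommProd (fun i => pd (some i)) (fun x _ y _ _ => pd_comm _ _)

@[simp] lemma Do_empty (p : Pn) : Do (∅ : Finset (Fin n)) p = p := by
  rw [Do]; exact LinearMap.congr_fun (noncommProd_empty _ _) p

lemma Do_insert {i : Fin n} {I : Finset (Fin n)} (h : i ∉ I) (p : Pn) :
    Do (insert i I) p = pderiv (some i) (Do I p) := by
  rw [Do]; exact LinearMap.congr_fun (noncommProd_insert_of_notMem _ _ _ _ h) p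

lemma DoA : ∀ (I : Finset (Fin n)) (j : Fin n) (f : Pn),
    (Do I (X (some j) ^ 2 * f) ∈ Ideal.span {(X (some j) : Pn)}) ∧
    (j ∉ I → Do I (X (some j) ^ 2 * f) = X (some j) ^ 2 * Do I f) := by
  intro I
  induction I using Finset.induction_on with
  | empty =>
    intro j f
    refine ⟨Ideal.mem_span_singleton'.mpr ⟨X (some j) * f, by rw [Do_empty]; ring⟩, ?_⟩
    intro _
    rw [Do_empty, Do_empty]
  | @insert i I hiI ih =>
    intro j f
    have hsec : j ∉ insert i I →
        Do (insert i I) (X (some j) ^ 2 * f) = X (some j) ^ 2 * Do (insert i I) f := by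
      intro hj
      have hji : j ≠ i := fun h => hj (h ▸ mem_insert_self i I)
      have hjI : j ∉ I := fun h => hj (mem_insert_of_mem h)
      rw [Do_insert hiI, Do_insert hiI, (ih j f).2 hjI, pderiv_mul]
      have hz : pderiv (some i) ((X (some j) : Pn) ^ 2) = 0 := by
        rw [pderiv_pow, pderiv_X_of_ne (fun hc => hji (Option.some_injective _ hc)), mul_zero]
      rw [hz, zero_mul, zero_add]
    refine ⟨?_, hsec⟩
    by_cases hj : j ∈ insert i I
    · rcases mem_insert.mp hj with rfl | hjI
      · -- j = i, so j ∉ I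
        have h2 := (ih j f).2 hiI
        rw [Do_insert hiI, h2, pderiv_mul, pderiv_pow, pderiv_X_self]
        refine Ideal.mem_span_singleton'.mpr
          ⟨((2 : ℕ) : Pn) * X (some j) ^ (2 - 1 - 1) * Do I f + X (some j) * pderiv (some j) (Do I f), ?_⟩
        ring
      · -- j ∈ I
        have hji : j ≠ i := fun h => hiI (h ▸ hjI)
        obtain ⟨u, hu⟩ := Ideal.mem_span_singleton'.mp (ih j f).1
        rw [Do_insert hiI, ← hu, pderiv_mul,
          pderiv_X_of_ne (fun hc => hji (Option.some_injective _ hc)), mul_zero, add_zero]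
        exact Ideal.mem_span_singleton'.mpr ⟨pderiv (some i) u, rfl⟩
    · rw [hsec hj]
      exact Ideal.mem_span_singleton'.mpr ⟨X (some j) * Do (insert i I) f, by ring⟩

noncomputable def zpt : Option (Fin n) → ℂ := fun o => o.elim 1 (fun _ => 0)

@[simp] lemma zpt_none : (zpt : Option (Fin n) → ℂ) none = 1 := rfl
@[simp] lemma zpt_some (i : Fin n) : (zpt : Option (Fin n) → ℂ) (some i) = 0 := rfl

noncomputable def LJ (J : Finset (Fin n)) : Pn := X none + ∑ j ∈ J, X (some j)

lemma pderiv_LJ (i : Fin n) (J : Finset (Fin n)) :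
    pderiv (some i) (LJ J) = if i ∈ J then 1 else 0 := by
  have hnone : pderiv (some i) (X none : Pn) = 0 :=
    pderiv_X_of_ne (fun hc => by cases hc)
  rw [LJ, map_add, hnone, zero_add, map_sum]
  by_cases hiJ : i ∈ J
  · rw [if_pos hiJ,
      Finset.sum_eq_single_of_mem i hiJ
        (fun j _ hne => pderiv_X_of_ne (fun hc => hne (Option.some_injective _ hc)))]
    exact pderiv_X_self _
  · rw [if_neg hiJ]
    exact sum_eq_zero fun j hj =>
      pderiv_X_of_ne (fun hc => hiJ ((Option.some_injective _ hc) ▸ hj))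

lemma aeval_Do_sq (I : Finset (Fin n)) (j : Fin n) (f : Pn) :
    aeval zpt (Do I (X (some j) ^ 2 * f)) = 0 := by
  obtain ⟨u, hu⟩ := Ideal.mem_span_singleton'.mp (DoA I j f).1
  rw [← hu, map_mul, aeval_X, zpt_some, mul_zero]

lemma Do_LJ_pow (J : Finset (Fin n)) (s : ℕ) :
    ∀ I : Finset (Fin n), I.card ≤ s →
      Do I (LJ J ^ s)
        = C (if I ⊆ J then ((s.descFactorial I.card : ℂ)) else 0) * LJ J ^ (s - I.card) := by
  intro I
  induction I using Finset.induction_on with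
  | empty =>
    intro _
    rw [Do_empty, card_empty, if_pos (empty_subset J)]
    simp
  | @insert i I hiI ih =>
    intro hc
    have hIc : I.card ≤ s := by
      rw [card_insert_of_notMem hiI] at hc; omega
    rw [Do_insert hiI, ih hIc, pderiv_C_mul, pderiv_pow, pderiv_LJ]
    rw [card_insert_of_notMem hiI]
    by_cases hiJ : i ∈ J
    · rw [if_pos hiJ, mul_one]
      by_cases hIJ : I ⊆ J
      · rw [if_pos hIJ, if_pos (insert_subset_iff.mpr ⟨hiJ, hIJ⟩), Nat.descFactorial_succ]
        have he : s - I.card - 1 = s - (I.card + 1) := by omega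
        have hcast : ((s - I.card : ℕ) : Pn) = C ((s - I.card : ℕ) : ℂ) := by
          simp
        rw [he, hcast, ← mul_assoc, mul_comm (C ((s.descFactorial I.card : ℂ))) _, ← map_mul,
          Nat.cast_mul]
      · rw [if_neg hIJ, if_neg (fun hc2 => hIJ (fun x hx => hc2 (mem_insert_of_mem hx)))]
        simp
    · rw [if_neg hiJ, mul_zero, mul_zero,
        if_neg (fun hc2 => hiJ (hc2 (mem_insert_self i I)))]
      simp

lemma aeval_LJ (J : Finset (Fin n)) : aeval (zpt : Option (Fin n) → ℂ) (LJ J) = 1 := by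
  rw [LJ, map_add, aeval_X, zpt_none, map_sum]
  rw [sum_eq_zero fun j _ => by rw [aeval_X, zpt_some]]
  ring

lemma aeval_Do_LJ_pow (J I : Finset (Fin n)) (s : ℕ) (hIs : I.card ≤ s) :
    aeval (zpt : Option (Fin n) → ℂ) (Do I (LJ J ^ s))
      = if I ⊆ J then ((s.descFactorial I.card : ℂ)) else 0 := by
  rw [Do_LJ_pow J s I hIs, map_mul, aeval_C, map_pow, aeval_LJ, one_pow, mul_one]
  simp

end Stmt9Front

open Stmt9Aux Stmt9Front Finset

open Stmt9 in
theorem stmt9 (m n : ℕ) (hn : n = 2 * m + 1) (s : ℕ) (hs : m ≤ s) :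
    LinearIndependent ℂ
      (fun J : {J : Finset (Fin n) // Even J.card} =>
        Ideal.Quotient.mk (sqIdeal n)
          (tau J.1 ((X none : MvPolynomial (Option (Fin n)) ℂ) ^ s))) := by
  have hnm : n ≤ 2 * m + 1 := by omega
  rw [Fintype.linearIndependent_iff]
  intro a ha
  have hq : ∀ J : Finset (Fin n),
      tau J ((X none : MvPolynomial (Option (Fin n)) ℂ) ^ s) = LJ J ^ s := by
    intro J
    simp only [Stmt9.tau, map_pow, aeval_X]
    rfl
  simp_rw [hq] at ha
  have hmem : (∑ J : {J : Finset (Fin n) // Even J.card}, a J • (LJ J.1 ^ s)) ∈ sqIdeal n := by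
    have hmk : Ideal.Quotient.mk (sqIdeal n)
        (∑ J : {J : Finset (Fin n) // Even J.card}, a J • (LJ J.1 ^ s)) = 0 := by
      rw [map_sum]
      have hsm : ∀ (c : ℂ) (x : MvPolynomial (Option (Fin n)) ℂ),
          Ideal.Quotient.mk (sqIdeal n) (c • x) = c • Ideal.Quotient.mk (sqIdeal n) x := by
        intro c x
        rw [← Ideal.Quotient.mkₐ_eq_mk ℂ, map_smul]
      simp_rw [hsm]
      exact ha
    exact Ideal.Quotient.eq_zero_iff_mem.mp hmk
  have hfun : ∀ I : Finset (Fin n), I.card ≤ m →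
      ∑ J : {J : Finset (Fin n) // Even J.card},
        a J * (if I ⊆ J.1 then ((s.descFactorial I.card : ℂ)) else 0) = 0 := by
    intro I hI
    have hIs : I.card ≤ s := le_trans hI hs
    have h1 : aeval (zpt : Option (Fin n) → ℂ)
        (Do I (∑ J : {J : Finset (Fin n) // Even J.card}, a J • (LJ J.1 ^ s))) = 0 := by
      rw [Stmt9.sqIdeal] at hmem
      obtain ⟨c, hc⟩ := Ideal.mem_span_range_iff_exists_fun.mp hmem
      rw [← hc, map_sum, map_sum]
      refine sum_eq_zero fun i _ => ?_
      rw [show c i * (X (some i) : MvPolynomial (Option (Fin n)) ℂ) ^ 2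
          = X (some i) ^ 2 * c i from mul_comm _ _]
      exact aeval_Do_sq I i (c i)
    rw [map_sum, map_sum] at h1
    simp_rw [map_smul] at h1
    simp_rw [aeval_Do_LJ_pow _ I s hIs] at h1
    simpa [smul_eq_mul] using h1
  set g : Finset (Fin n) → ℂ := fun J => if h : Even J.card then a ⟨J, h⟩ else 0 with hgdef
  have hpar : ∀ J : Finset (Fin n), ¬ Even J.card → g J = 0 := fun J h => dif_neg h
  have hgval : ∀ J : {J : Finset (Fin n) // Even J.card}, g J.1 = a J := by
    intro J
    simp only [hgdef, dif_pos J.2]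
  have hU : ∀ A : Finset (Fin n), A.card ≤ m → Usum g A = 0 := by
    intro A hA
    have hAs : A.card ≤ s := le_trans hA hs
    have hne : ((s.descFactorial A.card : ℂ)) ≠ 0 := by
      refine Nat.cast_ne_zero.mpr (fun h0 => ?_)
      exact absurd (Nat.descFactorial_eq_zero_iff_lt.mp h0) (not_lt.mpr hAs)
    have key : Usum g A * ((s.descFactorial A.card : ℂ))
        = ∑ J : {J : Finset (Fin n) // Even J.card},
            a J * (if A ⊆ J.1 then ((s.descFactorial A.card : ℂ)) else 0) := by
      have e1 : Usum g A * ((s.descFactorial A.card : ℂ))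
          = ∑ J : Finset (Fin n), g J * (if A ⊆ J then ((s.descFactorial A.card : ℂ)) else 0) := by
        rw [Usum, sum_mul]
        refine sum_congr rfl fun J _ => ?_
        split_ifs with h
        · ring
        · ring
      have e2 : ∑ J : Finset (Fin n), g J * (if A ⊆ J then ((s.descFactorial A.card : ℂ)) else 0)
          = ∑ J ∈ univ.filter (fun J : Finset (Fin n) => Even J.card),
              g J * (if A ⊆ J then ((s.descFactorial A.card : ℂ)) else 0) := by
        refine (sum_subset (filter_subset _ _) fun J _ hJ => ?_).symm
        rw [mem_filter] at hJ
        have : ¬ Even J.card := fun h => hJ ⟨mem_univ J, h⟩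
        rw [hpar J this, zero_mul]
      have e3 : ∑ J ∈ univ.filter (fun J : Finset (Fin n) => Even J.card),
              g J * (if A ⊆ J then ((s.descFactorial A.card : ℂ)) else 0)
          = ∑ J : {J : Finset (Fin n) // Even J.card},
              g J.1 * (if A ⊆ J.1 then ((s.descFactorial A.card : ℂ)) else 0) := by
        exact sum_subtype _ (by simp) _
      rw [e1, e2, e3]
      refine sum_congr rfl fun J _ => ?_
      rw [hgval J]
    have := hfun A hA
    rw [← key] at this
    exact (mul_eq_zero.mp this).resolve_right hne
  have hzero := comb m g (by simpa using hnm) hpar hU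
  intro J₀
  rw [← hgval J₀]
  exact hzero J₀.1
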